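/- Let T > 0, M > 0, let ω be a modulus of continuity, and let (μⁿ_t)_{n∈ℕ} and (μ_t) be weak-* measurable families of Borel probability measures on L²_x defined for t ∈ [0,T), with μⁿ_t(B_M(0)) = 1 for a.e. t and all n, and with the uniform structure-function bound S²_r(μⁿ_·,T)² ≤ ω(r) for all r > 0 and all n. If ∫₀^T W₁(μⁿ_t,μ_t) dt → 0 as n → ∞, then the limit family satisfies: (i) ∫_{L²_x} ‖u‖²_{L²} dμ_t(u) ≤ M² for a.e. t ∈ [0,T); and (ii) S²_r(μ_·,T)² ≤ ω(r) for every r > 0. -/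

import Mathlib

open MeasureTheory Metric Filter
open scoped ENNReal Topology

noncomputable section

instance factTwoPiPos : Fact (0 < 2 * Real.pi) := ⟨by positivity⟩

/-- The `d`-dimensional torus `D = (ℝ/2πℤ)^d`. -/
abbrev Torus (d : ℕ) := Fin d → AddCircle (2 * Real.pi)

/-- The phase space `U = ℝ^d`. -/
abbrev Vec (d : ℕ) := EuclideanSpace ℝ (Fin d)

/-- The projection of `h ∈ ℝ^d` to the torus (so that `u (x + toTorus d h)` realizes the
identification of `u ∈ L²(D)` with a `2π`-periodic function on `ℝ^d`). -/
def toTorus (d : ℕ) (h : Vec d) : Torus d := fun i => ((h i : ℝ) : AddCircle (2 * Real.pi))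

/-- The space `L²_x = L²(D; ℝ^d)`. -/
abbrev L2 (d : ℕ) := Lp (Vec d) 2 (volume : Measure (Torus d))

instance (d : ℕ) : MeasurableSpace (L2 d) := borel _
instance (d : ℕ) : BorelSpace (L2 d) := ⟨rfl⟩

/-- The squared structure function `S²_r(μ)²` of a measure `μ` on `L²_x`. -/
def sqStructFn (d : ℕ) (μ : Measure (L2 d)) (r : ℝ) : ℝ :=
  ∫ u : L2 d, (∫ x : Torus d, ⨍ h in ball (0 : Vec d) r,
    ‖u (x + toTorus d h) - u x‖ ^ 2) ∂μ

/-- The structure function `S²_r(μ)`. -/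
def structFn (d : ℕ) (μ : Measure (L2 d)) (r : ℝ) : ℝ := Real.sqrt (sqStructFn d μ r)

/-- The squared time-averaged structure function `S²_r(μ_·, T)²`. -/
def sqStructFnT (d : ℕ) (μ : ℝ → Measure (L2 d)) (T r : ℝ) : ℝ :=
  ∫ t in Set.Ico (0 : ℝ) T, sqStructFn d (μ t) r

/-- The time-averaged structure function `S²_r(μ_·, T)`. -/
def structFnT (d : ℕ) (μ : ℝ → Measure (L2 d)) (T r : ℝ) : ℝ :=
  Real.sqrt (sqStructFnT d μ T r)

/-- Weak-* measurability of a time-parametrized family of measures on `L²_x`: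
`t ↦ ∫ F dμ_t` is measurable for every bounded continuous `F : L²_x → ℝ`. -/
def WeakStarMeasurable (d : ℕ) (μ : ℝ → Measure (L2 d)) : Prop :=
  ∀ F : BoundedContinuousFunction (L2 d) ℝ, Measurable fun t => ∫ u, F u ∂(μ t)

/-- `π` is a coupling (transport plan) between `μ` and `ν`. -/
def IsCoupling (d : ℕ) (μ ν : Measure (L2 d)) (π : Measure (L2 d × L2 d)) : Prop :=
  IsProbabilityMeasure π ∧ π.map Prod.fst = μ ∧ π.map Prod.snd = ν

/-- The `1`-Wasserstein distance `W₁(μ, ν) = inf_π ∫ ‖u - v‖ dπ(u,v)` over couplings. -/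
def W1 (d : ℕ) (μ ν : Measure (L2 d)) : ℝ≥0∞ :=
  ⨅ (π : Measure (L2 d × L2 d)) (_ : IsCoupling d μ ν π), ∫⁻ p, ‖p.1 - p.2‖₊ ∂π

/-- The metric `d_T(μ_·, ν_·) = ∫₀^T W₁(μ_t, ν_t) dt` on `L¹([0,T); P)`. -/
def dT (d : ℕ) (T : ℝ) (μ ν : ℝ → Measure (L2 d)) : ℝ≥0∞ :=
  ∫⁻ t in Set.Ico (0 : ℝ) T, W1 d (μ t) (ν t)

/-- Membership in `L¹([0,T); P)`: a weak-* measurable family of Borel probability measures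
on `L²_x` with `∫₀^T ∫ ‖u‖ dμ_t(u) dt < ∞`. -/
def MemL1P (d : ℕ) (T : ℝ) (μ : ℝ → Measure (L2 d)) : Prop :=
  WeakStarMeasurable d μ ∧ (∀ t ∈ Set.Ico (0 : ℝ) T, IsProbabilityMeasure (μ t)) ∧
    (∫⁻ t in Set.Ico (0 : ℝ) T, ∫⁻ u, ‖u‖₊ ∂(μ t)) < ⊤

open scoped NNReal

instance fact2netop : Fact ((2 : ℝ≥0∞) ≠ ∞) := ⟨ENNReal.ofNat_ne_top⟩

instance (d : ℕ) : SecondCountableTopology (L2 d) :=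
  MeasureTheory.Lp.SecondCountableTopology



namespace ThmAux

lemma ofReal_norm_eq_coe_nnnorm {E : Type*} [SeminormedAddCommGroup E] (a : E) :
    ENNReal.ofReal ‖a‖ = (‖a‖₊ : ℝ≥0∞) := (ofReal_norm a).trans (enorm_eq_nnnorm a)

lemma sq_min_lip {a b s : ℝ} (ha : 0 ≤ a) (hb : 0 ≤ b) (hs : 0 ≤ s) :
    |min a s ^ 2 - min b s ^ 2| ≤ 2 * s * |a - b| := by
  have h1 : |min a s - min b s| ≤ |a - b| := by
    refine (abs_min_sub_min_le_max a s b s).trans ?_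
    simp
  have h2 : |min a s + min b s| ≤ 2 * s := by
    have k1 := min_le_right a s; have k2 := min_le_right b s
    have k3 : 0 ≤ min a s := le_min ha hs
    have k4 : 0 ≤ min b s := le_min hb hs
    rw [abs_of_nonneg (by linarith)]
    linarith
  calc |min a s ^ 2 - min b s ^ 2| = |min a s + min b s| * |min a s - min b s| := by
        rw [← abs_mul]; ring_nf
    _ ≤ 2 * s * |a - b| := mul_le_mul h2 h1 (abs_nonneg _) (by positivity)

lemma lint_sq {α E : Type*} [MeasurableSpace α] [NormedAddCommGroup E] (μ : Measure α)
    (f : α → E) : ∫⁻ x, (‖f x‖₊ : ℝ≥0∞) ^ 2 ∂μ = eLpNorm f 2 μ ^ 2 := by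
  rw [eLpNorm_eq_lintegral_rpow_enorm_toReal two_ne_zero ENNReal.ofNat_ne_top]
  rw [← ENNReal.rpow_natCast _ 2, ← ENNReal.rpow_mul]
  norm_num
  rfl

variable (d : ℕ)

lemma continuous_toTorus : Continuous (toTorus d) := by
  unfold toTorus
  exact continuous_pi fun i => (AddCircle.continuous_mk' _).comp ((EuclideanSpace.proj i).continuous)

lemma measurePreserving_tau (h : Vec d) :
    MeasurePreserving (fun x : Torus d => x + toTorus d h) volume volume :=
  measurePreserving_add_right volume _

lemma jointSM {f : Torus d → Vec d} (hf : StronglyMeasurable f) :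
    StronglyMeasurable (fun p : Torus d × Vec d => f (p.1 + toTorus d p.2) - f p.1) := by
  have hm : Measurable (fun p : Torus d × Vec d => p.1 + toTorus d p.2) :=
    (continuous_fst.add ((continuous_toTorus d).comp continuous_snd)).measurable
  exact (hf.comp_measurable hm).sub (hf.comp_measurable measurable_fst)

lemma sm_T {f : Torus d → Vec d} (hf : StronglyMeasurable f) (h : Vec d) :
    StronglyMeasurable (fun x => f (x + toTorus d h) - f x) :=
  (hf.comp_measurable (measurePreserving_tau d h).measurable).sub hf

lemma eLpNorm_T_le {f : Torus d → Vec d} (hf : StronglyMeasurable f) (h : Vec d) :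
    eLpNorm (fun x => f (x + toTorus d h) - f x) 2 (volume : Measure (Torus d))
      ≤ 2 * eLpNorm f 2 volume := by
  have h1 : eLpNorm (f ∘ fun x : Torus d => x + toTorus d h) 2 volume = eLpNorm f 2 volume :=
    eLpNorm_comp_measurePreserving hf.aestronglyMeasurable (measurePreserving_tau d h)
  have h2 := eLpNorm_sub_le (p := 2) (μ := (volume : Measure (Torus d)))
    (f := f ∘ fun x : Torus d => x + toTorus d h) (g := f)
    (hf.comp_measurable (measurePreserving_tau d h).measurable).aestronglyMeasurable
    hf.aestronglyMeasurable one_le_two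
  rw [h1] at h2
  have h3 : ((f ∘ fun x : Torus d => x + toTorus d h) - f)
      = fun x => f (x + toTorus d h) - f x := rfl
  rw [h3] at h2
  calc eLpNorm (fun x => f (x + toTorus d h) - f x) 2 volume
      ≤ eLpNorm f 2 volume + eLpNorm f 2 volume := h2
    _ = 2 * eLpNorm f 2 volume := (two_mul _).symm

/-- The squared translation-difference `Λ(u,h)` as a lower integral. -/
def Lam (u : L2 d) (h : Vec d) : ℝ≥0∞ :=
  ∫⁻ x : Torus d, (‖u (x + toTorus d h) - u x‖₊ : ℝ≥0∞) ^ 2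

/-- `ξ(u,h) = ‖τ_h u - u‖_{L²}` as an `ℝ≥0∞`-valued quantity. -/
def xi (u : L2 d) (h : Vec d) : ℝ≥0∞ :=
  eLpNorm (fun x => u (x + toTorus d h) - u x) 2 (volume : Measure (Torus d))

lemma Lam_eq_xi_sq (u : L2 d) (h : Vec d) : Lam d u h = xi d u h ^ 2 := lint_sq _ _

lemma norm_eq_eLpNorm (u : L2 d) :
    ENNReal.ofReal ‖u‖ = eLpNorm (u : Torus d → Vec d) 2 (volume : Measure (Torus d)) := by
  rw [Lp.norm_def, ENNReal.ofReal_toReal (Lp.eLpNorm_ne_top u)]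

lemma xi_le (u : L2 d) (h : Vec d) : xi d u h ≤ 2 * ENNReal.ofReal ‖u‖ := by
  rw [norm_eq_eLpNorm]
  exact eLpNorm_T_le d (Lp.stronglyMeasurable u) h

lemma xi_ne_top (u : L2 d) (h : Vec d) : xi d u h ≠ ∞ :=
  ((xi_le d u h).trans_lt (ENNReal.mul_lt_top (by norm_num) ENNReal.ofReal_lt_top)).ne

lemma xi_tri (u v : L2 d) (h : Vec d) :
    xi d u h ≤ xi d v h + 2 * ENNReal.ofReal ‖u - v‖ := by
  set w : Torus d → Vec d := (u : Torus d → Vec d) - (v : Torus d → Vec d) with hw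
  have hwsm : StronglyMeasurable w := (Lp.stronglyMeasurable u).sub (Lp.stronglyMeasurable v)
  have key : (fun x => u (x + toTorus d h) - u x)
      = (fun x => v (x + toTorus d h) - v x) + fun x => w (x + toTorus d h) - w x := by
    funext x
    simp only [hw, Pi.add_apply, Pi.sub_apply]
    abel
  have hcongr : eLpNorm w 2 (volume : Measure (Torus d))
      = eLpNorm ((u - v : L2 d) : Torus d → Vec d) 2 volume :=
    eLpNorm_congr_ae (Lp.coeFn_sub u v).symm
  calc xi d u h ≤ eLpNorm (fun x => v (x + toTorus d h) - v x) 2 volume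
        + eLpNorm (fun x => w (x + toTorus d h) - w x) 2 volume := by
        rw [xi, key]
        exact eLpNorm_add_le (sm_T d (Lp.stronglyMeasurable v) h).aestronglyMeasurable
          (sm_T d hwsm h).aestronglyMeasurable one_le_two
    _ ≤ xi d v h + 2 * ENNReal.ofReal ‖u - v‖ := by
        refine add_le_add le_rfl ?_
        rw [norm_eq_eLpNorm, ← hcongr]
        exact eLpNorm_T_le d hwsm h

/-- `ψ(u,h) = ‖τ_h u - u‖_{L²}` as a real number. -/
def psi (u : L2 d) (h : Vec d) : ℝ := (xi d u h).toReal

/-- `Φ(u,h) = ‖τ_h u - u‖²_{L²}`. -/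
def Phi (u : L2 d) (h : Vec d) : ℝ := (Lam d u h).toReal

lemma psi_nonneg (u : L2 d) (h : Vec d) : 0 ≤ psi d u h := ENNReal.toReal_nonneg

lemma Phi_eq_sq_psi (u : L2 d) (h : Vec d) : Phi d u h = psi d u h ^ 2 := by
  rw [Phi, Lam_eq_xi_sq, ENNReal.toReal_pow, psi]

lemma psi_le (u : L2 d) (h : Vec d) : psi d u h ≤ 2 * ‖u‖ := by
  have := ENNReal.toReal_mono (by finiteness) (xi_le d u h)
  rwa [ENNReal.toReal_mul, ENNReal.toReal_ofReal (norm_nonneg u), ENNReal.toReal_ofNat] at this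

lemma psi_lip (u v : L2 d) (h : Vec d) : |psi d u h - psi d v h| ≤ 2 * ‖u - v‖ := by
  have key : ∀ a b : L2 d, psi d a h ≤ psi d b h + 2 * ‖a - b‖ := by
    intro a b
    have := ENNReal.toReal_mono (by
        refine ENNReal.add_ne_top.2 ⟨xi_ne_top d b h, ?_⟩
        finiteness) (xi_tri d a b h)
    rw [ENNReal.toReal_add (xi_ne_top d b h) (by finiteness), ENNReal.toReal_mul,
      ENNReal.toReal_ofReal (norm_nonneg _), ENNReal.toReal_ofNat] at this
    exact this
  have h1 := key u v
  have h2 := key v u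
  rw [norm_sub_rev] at h2
  rw [abs_le]
  constructor <;> linarith

lemma Phi_nonneg (u : L2 d) (h : Vec d) : 0 ≤ Phi d u h := ENNReal.toReal_nonneg

lemma Phi_le (u : L2 d) (h : Vec d) : Phi d u h ≤ 4 * ‖u‖ ^ 2 := by
  rw [Phi_eq_sq_psi]
  have h1 := psi_le d u h
  have h2 := psi_nonneg d u h
  nlinarith

lemma measurable_Lam (u : L2 d) : Measurable fun h => Lam d u h := by
  have hsm : Measurable (fun p : Torus d × Vec d =>
      (‖u (p.1 + toTorus d p.2) - u p.1‖₊ : ℝ≥0∞) ^ 2) :=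
    ((jointSM d (Lp.stronglyMeasurable u)).measurable.nnnorm.coe_nnreal_ennreal).pow_const 2
  exact hsm.lintegral_prod_left'

lemma measurable_psi (u : L2 d) : Measurable fun h => psi d u h := by
  have h1 : Measurable fun h => Phi d u h := (measurable_Lam d u).ennreal_toReal
  have : (fun h => psi d u h) = fun h => Real.sqrt (Phi d u h) := by
    funext h
    rw [Phi_eq_sq_psi, Real.sqrt_sq (psi_nonneg d u h)]
  rw [this]
  exact h1.sqrt


/-- The normalized (probability) measure on the ball of radius `r`. -/
def P (r : ℝ) : Measure (Vec d) :=
  (volume (ball (0 : Vec d) r))⁻¹ • volume.restrict (ball (0 : Vec d) r)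

lemma isProbabilityMeasure_P {r : ℝ} (hr : 0 < r) : IsProbabilityMeasure (P d r) := by
  constructor
  rw [P, Measure.smul_apply, Measure.restrict_apply_univ, smul_eq_mul,
    ENNReal.inv_mul_cancel (measure_ball_pos volume 0 hr).ne' measure_ball_lt_top.ne]

lemma avg_eq {r : ℝ} (g : Vec d → ℝ) :
    (⨍ h in ball (0 : Vec d) r, g h) = ∫ h, g h ∂(P d r) := by
  rw [setAverage_eq', P]

/-- Fubini representation of the inner structure-function integrand. -/
lemma G_repr {r : ℝ} (hr : 0 < r) (u : L2 d) :
    (∫ x : Torus d, ⨍ h in ball (0 : Vec d) r, ‖u (x + toTorus d h) - u x‖ ^ 2)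
      = ∫ h, Phi d u h ∂(P d r) := by
  haveI := isProbabilityMeasure_P d hr
  have hsm : StronglyMeasurable (fun p : Torus d × Vec d => u (p.1 + toTorus d p.2) - u p.1) :=
    jointSM d (Lp.stronglyMeasurable u)
  set f : Torus d × Vec d → ℝ := fun p => ‖u (p.1 + toTorus d p.2) - u p.1‖ ^ 2 with hf
  have hfm : Measurable f := (hsm.measurable.norm).pow_const 2
  have hfnn : ∀ p, 0 ≤ f p := fun p => sq_nonneg _
  have hofReal : ∀ p, ENNReal.ofReal (f p)
      = (‖u (p.1 + toTorus d p.2) - u p.1‖₊ : ℝ≥0∞) ^ 2 := by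
    intro p
    rw [hf, ENNReal.ofReal_pow (norm_nonneg _), ofReal_norm_eq_coe_nnnorm]
  have hnorm : ∀ p, (‖f p‖₊ : ℝ≥0∞) = ENNReal.ofReal (f p) := by
    intro p
    rw [← ofReal_norm_eq_coe_nnnorm, Real.norm_of_nonneg (hfnn p)]
  have hint : Integrable f ((volume : Measure (Torus d)).prod (P d r)) := by
    refine ⟨hfm.aestronglyMeasurable, ?_⟩
    show (∫⁻ p, (‖f p‖₊ : ℝ≥0∞) ∂((volume : Measure (Torus d)).prod (P d r))) < ⊤
    calc ∫⁻ p, (‖f p‖₊ : ℝ≥0∞) ∂((volume : Measure (Torus d)).prod (P d r))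
        = ∫⁻ p, (‖u (p.1 + toTorus d p.2) - u p.1‖₊ : ℝ≥0∞) ^ 2
            ∂((volume : Measure (Torus d)).prod (P d r)) := by
          refine lintegral_congr fun p => ?_
          rw [hnorm p, hofReal p]
      _ = ∫⁻ x, ∫⁻ h, (‖u (x + toTorus d h) - u x‖₊ : ℝ≥0∞) ^ 2 ∂(P d r) ∂volume := by
          exact lintegral_prod _ (hsm.measurable.nnnorm.coe_nnreal_ennreal.pow_const 2).aemeasurable
      _ = ∫⁻ h, ∫⁻ x, (‖u (x + toTorus d h) - u x‖₊ : ℝ≥0∞) ^ 2 ∂volume ∂(P d r) := by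
          exact lintegral_lintegral_swap
            (hsm.measurable.nnnorm.coe_nnreal_ennreal.pow_const 2).aemeasurable
      _ = ∫⁻ h, Lam d u h ∂(P d r) := rfl
      _ ≤ ∫⁻ _, (2 * ENNReal.ofReal ‖u‖) ^ 2 ∂(P d r) := by
          refine lintegral_mono fun h => ?_
          rw [Lam_eq_xi_sq]
          exact pow_le_pow_left' (xi_le d u h) 2
      _ < ⊤ := by
          rw [lintegral_const, measure_univ, mul_one]
          exact ENNReal.pow_lt_top (ENNReal.mul_lt_top (by norm_num) ENNReal.ofReal_lt_top)
  have swap := integral_integral_swap (f := fun (x : Torus d) (h : Vec d) => f (x, h))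
    (μ := (volume : Measure (Torus d))) (ν := P d r) hint
  calc (∫ x : Torus d, ⨍ h in ball (0 : Vec d) r, ‖u (x + toTorus d h) - u x‖ ^ 2)
      = ∫ x : Torus d, ∫ h, f (x, h) ∂(P d r) := by
        refine integral_congr_ae (Filter.Eventually.of_forall fun x => ?_)
        exact avg_eq d _
    _ = ∫ h, ∫ x, f (x, h) ∂(volume : Measure (Torus d)) ∂(P d r) := swap
    _ = ∫ h, Phi d u h ∂(P d r) := by
        refine integral_congr_ae (Filter.Eventually.of_forall fun h => ?_)
        show (∫ x, f (x, h) ∂(volume : Measure (Torus d))) = Phi d u h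
        rw [integral_eq_lintegral_of_nonneg_ae (Filter.Eventually.of_forall fun x => hfnn (x, h))
          ((sm_T d (Lp.stronglyMeasurable u) h).norm.pow 2).aestronglyMeasurable]
        rw [Phi, Lam]
        congr 1
        exact lintegral_congr fun x => hofReal (x, h)


/-- The truncated structure functional `F_s(u) = ⨍ min(ψ(u,h), s)² dP_r(h)`. -/
def Fc (r s : ℝ) (u : L2 d) : ℝ := ∫ h, min (psi d u h) s ^ 2 ∂(P d r)

/-- The full structure functional `G(u) = ⨍ Φ(u,h) dP_r(h)`. -/
def GG (r : ℝ) (u : L2 d) : ℝ := ∫ h, Phi d u h ∂(P d r)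

variable {r s : ℝ}

lemma integrable_min_sq (hr : 0 < r) (hs : 0 ≤ s) (u : L2 d) :
    Integrable (fun h => min (psi d u h) s ^ 2) (P d r) := by
  haveI := isProbabilityMeasure_P d hr
  refine (integrable_const (s ^ 2)).mono' ?_ ?_
  · exact (((measurable_psi d u).min measurable_const).pow_const 2).aestronglyMeasurable
  · refine Filter.Eventually.of_forall fun h => ?_
    rw [Real.norm_of_nonneg (sq_nonneg _)]
    have h1 : 0 ≤ min (psi d u h) s := le_min (psi_nonneg d u h) hs
    have h2 : min (psi d u h) s ≤ s := min_le_right _ _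
    nlinarith

lemma integrable_Phi (hr : 0 < r) (u : L2 d) : Integrable (fun h => Phi d u h) (P d r) := by
  haveI := isProbabilityMeasure_P d hr
  refine (integrable_const (4 * ‖u‖ ^ 2)).mono' ?_ ?_
  · exact ((measurable_Lam d u).ennreal_toReal).aestronglyMeasurable
  · exact Filter.Eventually.of_forall fun h => by
      rw [Real.norm_of_nonneg (Phi_nonneg d u h)]; exact Phi_le d u h

lemma Fc_nonneg (u : L2 d) : 0 ≤ Fc d r s u :=
  integral_nonneg fun h => sq_nonneg _

lemma GG_nonneg (u : L2 d) : 0 ≤ GG d r u :=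
  integral_nonneg fun h => Phi_nonneg d u h

lemma Fc_le_sq (hr : 0 < r) (hs : 0 ≤ s) (u : L2 d) : Fc d r s u ≤ s ^ 2 := by
  haveI := isProbabilityMeasure_P d hr
  calc Fc d r s u ≤ ∫ _, s ^ 2 ∂(P d r) := by
        refine integral_mono (integrable_min_sq d hr hs u) (integrable_const _) fun h => ?_
        have h1 : 0 ≤ min (psi d u h) s := le_min (psi_nonneg d u h) hs
        have h2 : min (psi d u h) s ≤ s := min_le_right _ _
        nlinarith
    _ = s ^ 2 := by rw [integral_const, probReal_univ, one_smul]

lemma Fc_mono (hr : 0 < r) {s₁ s₂ : ℝ} (hs₁ : 0 ≤ s₁) (hs : s₁ ≤ s₂) (u : L2 d) :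
    Fc d r s₁ u ≤ Fc d r s₂ u := by
  refine integral_mono (integrable_min_sq d hr hs₁ u)
    (integrable_min_sq d hr (hs₁.trans hs) u) fun h => ?_
  have h1 : 0 ≤ min (psi d u h) s₁ := le_min (psi_nonneg d u h) hs₁
  have h2 : min (psi d u h) s₁ ≤ min (psi d u h) s₂ := min_le_min le_rfl hs
  nlinarith

lemma Fc_le_GG (hr : 0 < r) (hs : 0 ≤ s) (u : L2 d) : Fc d r s u ≤ GG d r u := by
  refine integral_mono (integrable_min_sq d hr hs u) (integrable_Phi d hr u) fun h => ?_
  rw [Phi_eq_sq_psi]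
  have h1 : 0 ≤ min (psi d u h) s := le_min (psi_nonneg d u h) hs
  have h2 : min (psi d u h) s ≤ psi d u h := min_le_left _ _
  nlinarith

lemma Fc_eq_GG (hr : 0 < r) (u : L2 d) (hus : 2 * ‖u‖ ≤ s) : Fc d r s u = GG d r u := by
  refine integral_congr_ae (Filter.Eventually.of_forall fun h => ?_)
  show (min (psi d u h) s) ^ 2 = Phi d u h
  rw [Phi_eq_sq_psi, min_eq_left ((psi_le d u h).trans hus)]

lemma Fc_lip (hr : 0 < r) (hs : 0 ≤ s) (u v : L2 d) :
    |Fc d r s u - Fc d r s v| ≤ 4 * s * ‖u - v‖ := by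
  haveI := isProbabilityMeasure_P d hr
  rw [Fc, Fc, ← integral_sub (integrable_min_sq d hr hs u) (integrable_min_sq d hr hs v)]
  calc |∫ h, (min (psi d u h) s ^ 2 - min (psi d v h) s ^ 2) ∂(P d r)|
      ≤ ∫ h, |min (psi d u h) s ^ 2 - min (psi d v h) s ^ 2| ∂(P d r) := by
        simpa using norm_integral_le_integral_norm
          (fun h => min (psi d u h) s ^ 2 - min (psi d v h) s ^ 2) (μ := P d r)
    _ ≤ ∫ _, 4 * s * ‖u - v‖ ∂(P d r) := by
        refine integral_mono ((integrable_min_sq d hr hs u).sub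
          (integrable_min_sq d hr hs v)).abs (integrable_const _) fun h => ?_
        calc |min (psi d u h) s ^ 2 - min (psi d v h) s ^ 2|
            ≤ 2 * s * |psi d u h - psi d v h| :=
              sq_min_lip (psi_nonneg d u h) (psi_nonneg d v h) hs
          _ ≤ 2 * s * (2 * ‖u - v‖) := by
              refine mul_le_mul_of_nonneg_left (psi_lip d u v h) (by positivity)
          _ = 4 * s * ‖u - v‖ := by ring
    _ = 4 * s * ‖u - v‖ := by rw [integral_const, probReal_univ, one_smul]

lemma Fc_tendsto (hr : 0 < r) (u : L2 d) :
    Tendsto (fun K : ℕ => Fc d r K u) atTop (𝓝 (GG d r u)) := by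
  refine tendsto_integral_of_dominated_convergence (fun h => Phi d u h)
    (fun K => (((measurable_psi d u).min measurable_const).pow_const 2).aestronglyMeasurable)
    (integrable_Phi d hr u) (fun K => Filter.Eventually.of_forall fun h => ?_)
    (Filter.Eventually.of_forall fun h => ?_)
  · show ‖(min (psi d u h) (K : ℝ)) ^ 2‖ ≤ Phi d u h
    rw [Real.norm_of_nonneg (sq_nonneg _), Phi_eq_sq_psi]
    have h1 : 0 ≤ min (psi d u h) (K : ℝ) := le_min (psi_nonneg d u h) (Nat.cast_nonneg K)
    have h2 : min (psi d u h) (K : ℝ) ≤ psi d u h := min_le_left _ _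
    nlinarith
  · refine Tendsto.congr' ?_ tendsto_const_nhds
    filter_upwards [eventually_ge_atTop ⌈psi d u h⌉₊] with K hK
    rw [Phi_eq_sq_psi, min_eq_left ((Nat.le_ceil _).trans (Nat.cast_le.mpr hK))]

/-- `Fc` as a bounded continuous function. -/
def FcB (hr : 0 < r) (hs : 0 ≤ s) : BoundedContinuousFunction (L2 d) ℝ :=
  BoundedContinuousFunction.ofNormedAddCommGroup (Fc d r s)
    (LipschitzWith.continuous (K := Real.toNNReal (4 * s))
      (LipschitzWith.of_dist_le_mul fun u v => by
        rw [Real.dist_eq, Real.coe_toNNReal _ (by positivity), dist_eq_norm]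
        exact Fc_lip d hr hs u v))
    (s ^ 2) (fun u => by
      rw [Real.norm_of_nonneg (Fc_nonneg d u)]
      exact Fc_le_sq d hr hs u)

lemma FcB_apply (hr : 0 < r) (hs : 0 ≤ s) (u : L2 d) : FcB d hr hs u = Fc d r s u := rfl

lemma FcB_lip (hr : 0 < r) (hs : 0 ≤ s) :
    LipschitzWith (Real.toNNReal (4 * s) + 1) (FcB d hr hs) := by
  refine LipschitzWith.weaken ?_ (le_add_of_nonneg_right zero_le_one)
  exact LipschitzWith.of_dist_le_mul fun u v => by
    rw [Real.dist_eq, Real.coe_toNNReal _ (by positivity), dist_eq_norm]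
    exact Fc_lip d hr hs u v

/-- The truncated norm functional as a bounded continuous function. -/
def nB (hs : 0 ≤ s) : BoundedContinuousFunction (L2 d) ℝ :=
  BoundedContinuousFunction.ofNormedAddCommGroup (fun u : L2 d => min ‖u‖ s ^ 2)
    (LipschitzWith.continuous (K := Real.toNNReal (2 * s))
      (LipschitzWith.of_dist_le_mul fun u v => by
        rw [Real.dist_eq, Real.coe_toNNReal _ (by positivity), dist_eq_norm]
        calc |min ‖u‖ s ^ 2 - min ‖v‖ s ^ 2| ≤ 2 * s * |‖u‖ - ‖v‖| :=
              sq_min_lip (norm_nonneg u) (norm_nonneg v) hs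
          _ ≤ 2 * s * ‖u - v‖ := by
              refine mul_le_mul_of_nonneg_left (abs_norm_sub_norm_le u v) (by positivity)))
    (s ^ 2) (fun u => by
      rw [Real.norm_of_nonneg (sq_nonneg _)]
      have h1 : 0 ≤ min ‖u‖ s := le_min (norm_nonneg u) hs
      have h2 : min ‖u‖ s ≤ s := min_le_right _ _
      nlinarith)

lemma nB_apply (hs : 0 ≤ s) (u : L2 d) : nB d hs u = min ‖u‖ s ^ 2 := rfl

lemma nB_lip (hs : 0 ≤ s) : LipschitzWith (Real.toNNReal (2 * s) + 1) (nB d hs) := by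
  refine LipschitzWith.weaken ?_ (le_add_of_nonneg_right zero_le_one)
  exact LipschitzWith.of_dist_le_mul fun u v => by
    rw [Real.dist_eq, Real.coe_toNNReal _ (by positivity), dist_eq_norm]
    calc |min ‖u‖ s ^ 2 - min ‖v‖ s ^ 2| ≤ 2 * s * |‖u‖ - ‖v‖| :=
          sq_min_lip (norm_nonneg u) (norm_nonneg v) hs
      _ ≤ 2 * s * ‖u - v‖ := by
          refine mul_le_mul_of_nonneg_left (abs_norm_sub_norm_le u v) (by positivity)


/-- Coupling version of the Wasserstein transfer inequality. -/
lemma transfer_coupling (ν₁ ν₂ : Measure (L2 d)) (F : BoundedContinuousFunction (L2 d) ℝ)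
    (L : ℝ≥0) (hL : L ≠ 0) (hF : LipschitzWith L F) (π : Measure (L2 d × L2 d))
    (hπ : IsCoupling d ν₁ ν₂ π) :
    ENNReal.ofReal (∫ u, F u ∂ν₂)
      ≤ ENNReal.ofReal (∫ u, F u ∂ν₁) + (L : ℝ≥0∞) * ∫⁻ p, (‖p.1 - p.2‖₊ : ℝ≥0∞) ∂π := by
  obtain ⟨hprob, hm1, hm2⟩ := hπ
  haveI := hprob
  set H : ℝ≥0∞ := ∫⁻ p, (‖p.1 - p.2‖₊ : ℝ≥0∞) ∂π with hH
  by_cases htop : H = ⊤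
  · rw [htop, ENNReal.mul_top (by exact_mod_cast hL)]
    exact le_top.trans_eq (add_top _).symm
  -- integrability
  have hF1 : Integrable (fun p : L2 d × L2 d => F p.1) π :=
    (F.compContinuous ⟨Prod.fst, continuous_fst⟩).integrable π
  have hF2 : Integrable (fun p : L2 d × L2 d => F p.2) π :=
    (F.compContinuous ⟨Prod.snd, continuous_snd⟩).integrable π
  have hgsm : AEStronglyMeasurable (fun p : L2 d × L2 d => (L : ℝ) * ‖p.1 - p.2‖) π :=
    (continuous_const.mul ((continuous_fst.sub continuous_snd).norm)).aestronglyMeasurable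
  have hofReal : ∀ p : L2 d × L2 d, ENNReal.ofReal ((L : ℝ) * ‖p.1 - p.2‖)
      = (L : ℝ≥0∞) * (‖p.1 - p.2‖₊ : ℝ≥0∞) := by
    intro p
    rw [ENNReal.ofReal_mul L.coe_nonneg, ofReal_norm_eq_coe_nnnorm, ENNReal.ofReal_coe_nnreal]
  have hg : Integrable (fun p : L2 d × L2 d => (L : ℝ) * ‖p.1 - p.2‖) π := by
    refine ⟨hgsm, ?_⟩
    show (∫⁻ p, (‖(L : ℝ) * ‖p.1 - p.2‖‖₊ : ℝ≥0∞) ∂π) < ⊤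
    have : ∀ p : L2 d × L2 d, (‖(L : ℝ) * ‖p.1 - p.2‖‖₊ : ℝ≥0∞)
        = (L : ℝ≥0∞) * (‖p.1 - p.2‖₊ : ℝ≥0∞) := by
      intro p
      rw [← ofReal_norm_eq_coe_nnnorm, Real.norm_of_nonneg (by positivity), hofReal p]
    rw [lintegral_congr this, lintegral_const_mul' _ _ ENNReal.coe_ne_top]
    exact ENNReal.mul_lt_top ENNReal.coe_lt_top (lt_top_iff_ne_top.2 htop)
  have hint2 : ∫ u, F u ∂ν₂ = ∫ p, F p.2 ∂π := by
    rw [← hm2, integral_map measurable_snd.aemeasurable F.continuous.aestronglyMeasurable]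
  have hint1 : ∫ u, F u ∂ν₁ = ∫ p, F p.1 ∂π := by
    rw [← hm1, integral_map measurable_fst.aemeasurable F.continuous.aestronglyMeasurable]
  have hptwise : ∀ p : L2 d × L2 d, F p.2 - F p.1 ≤ (L : ℝ) * ‖p.1 - p.2‖ := by
    intro p
    have := hF.dist_le_mul p.2 p.1
    rw [Real.dist_eq] at this
    have h2 := (le_abs_self (F p.2 - F p.1)).trans this
    calc F p.2 - F p.1 ≤ (L : ℝ) * dist p.2 p.1 := h2
      _ = (L : ℝ) * ‖p.1 - p.2‖ := by rw [dist_eq_norm, norm_sub_rev]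
  have hkey : ∫ u, F u ∂ν₂ - ∫ u, F u ∂ν₁ ≤ ((L : ℝ≥0∞) * H).toReal := by
    rw [hint1, hint2, ← integral_sub hF2 hF1]
    calc ∫ p, (F p.2 - F p.1) ∂π ≤ ∫ p, (L : ℝ) * ‖p.1 - p.2‖ ∂π :=
          integral_mono (hF2.sub hF1) hg fun p => hptwise p
      _ = ((L : ℝ≥0∞) * H).toReal := by
          rw [integral_eq_lintegral_of_nonneg_ae
            (Filter.Eventually.of_forall fun p => by positivity) hgsm]
          congr 1
          rw [lintegral_congr hofReal, lintegral_const_mul' _ _ ENNReal.coe_ne_top]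
  have hLH : (L : ℝ≥0∞) * H ≠ ⊤ := ENNReal.mul_ne_top ENNReal.coe_ne_top htop
  calc ENNReal.ofReal (∫ u, F u ∂ν₂)
      ≤ ENNReal.ofReal (∫ u, F u ∂ν₁ + ((L : ℝ≥0∞) * H).toReal) :=
        ENNReal.ofReal_le_ofReal (by linarith)
    _ ≤ ENNReal.ofReal (∫ u, F u ∂ν₁) + ENNReal.ofReal (((L : ℝ≥0∞) * H).toReal) :=
        ENNReal.ofReal_add_le
    _ = ENNReal.ofReal (∫ u, F u ∂ν₁) + (L : ℝ≥0∞) * H := by rw [ENNReal.ofReal_toReal hLH]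

/-- Wasserstein transfer inequality. -/
lemma transfer (ν₁ ν₂ : Measure (L2 d)) (F : BoundedContinuousFunction (L2 d) ℝ)
    (L : ℝ≥0) (hL : L ≠ 0) (hF : LipschitzWith L F) :
    ENNReal.ofReal (∫ u, F u ∂ν₂)
      ≤ ENNReal.ofReal (∫ u, F u ∂ν₁) + (L : ℝ≥0∞) * W1 d ν₁ ν₂ := by
  by_cases hW : W1 d ν₁ ν₂ = ⊤
  · rw [hW, ENNReal.mul_top (by exact_mod_cast hL)]
    exact le_top.trans_eq (add_top _).symm
  refine ENNReal.le_of_forall_pos_le_add fun ε hε hfin => ?_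
  have hδ : (0 : ℝ≥0∞) < (ε : ℝ≥0∞) / (L : ℝ≥0∞) := by
    refine ENNReal.div_pos (by exact_mod_cast hε.ne') ENNReal.coe_ne_top
  have hlt : W1 d ν₁ ν₂ < W1 d ν₁ ν₂ + (ε : ℝ≥0∞) / (L : ℝ≥0∞) :=
    ENNReal.lt_add_right hW hδ.ne'
  rw [W1] at hlt
  rw [iInf_lt_iff] at hlt
  obtain ⟨π, hπlt⟩ := hlt
  rw [iInf_lt_iff] at hπlt
  obtain ⟨hπ, hlt'⟩ := hπlt
  calc ENNReal.ofReal (∫ u, F u ∂ν₂)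
      ≤ ENNReal.ofReal (∫ u, F u ∂ν₁) + (L : ℝ≥0∞) * ∫⁻ p, (‖p.1 - p.2‖₊ : ℝ≥0∞) ∂π :=
        transfer_coupling d ν₁ ν₂ F L hL hF π hπ
    _ ≤ ENNReal.ofReal (∫ u, F u ∂ν₁)
        + (L : ℝ≥0∞) * (W1 d ν₁ ν₂ + (ε : ℝ≥0∞) / (L : ℝ≥0∞)) := by
        exact add_le_add le_rfl (mul_le_mul_right hlt'.le _)
    _ = ENNReal.ofReal (∫ u, F u ∂ν₁) + (L : ℝ≥0∞) * W1 d ν₁ ν₂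
        + (L : ℝ≥0∞) * ((ε : ℝ≥0∞) / (L : ℝ≥0∞)) := by ring
    _ ≤ ENNReal.ofReal (∫ u, F u ∂ν₁) + (L : ℝ≥0∞) * W1 d ν₁ ν₂ + (ε : ℝ≥0∞) := by
        exact add_le_add le_rfl ENNReal.mul_div_le


lemma sqStructFn_eq {r : ℝ} (hr : 0 < r) (ν : Measure (L2 d)) :
    sqStructFn d ν r = ∫ u, GG d r u ∂ν := by
  simp only [sqStructFn]
  exact integral_congr_ae (Filter.Eventually.of_forall fun u => G_repr d hr u)

lemma sqStructFn_nonneg {r : ℝ} (hr : 0 < r) (ν : Measure (L2 d)) :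
    0 ≤ sqStructFn d ν r := by
  rw [sqStructFn_eq d hr]
  exact integral_nonneg fun u => GG_nonneg d u

lemma norm_integral_BCF_le {ν : Measure (L2 d)} [IsProbabilityMeasure ν]
    (F : BoundedContinuousFunction (L2 d) ℝ) : ‖∫ u, F u ∂ν‖ ≤ ‖F‖ := by
  refine (norm_integral_le_integral_norm _).trans ?_
  calc ∫ u, ‖F u‖ ∂ν ≤ ∫ _, ‖F‖ ∂ν :=
        integral_mono (F.integrable ν).norm (integrable_const _)
          fun u => F.norm_coe_le_norm u
    _ = ‖F‖ := by simp [measure_univ]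

/-- If `ν` is a probability measure concentrated on `B_M(0)`, the structure functional
coincides with the truncated bounded continuous version. -/
lemma sqStructFn_eq_trunc {r M : ℝ} (hr : 0 < r) (hM : 0 ≤ 2 * M)
    (ν : Measure (L2 d)) [IsProbabilityMeasure ν] (hb : ν (ball (0 : L2 d) M) = 1) :
    sqStructFn d ν r = ∫ u, FcB d hr hM u ∂ν := by
  rw [sqStructFn_eq d hr]
  refine integral_congr_ae ?_
  have hcompl : ν (ball (0 : L2 d) M)ᶜ = 0 := by
    rw [measure_compl measurableSet_ball (measure_ne_top _ _), hb, measure_univ, tsub_self]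
  filter_upwards [(mem_ae_iff.2 hcompl : ∀ᵐ u ∂ν, u ∈ ball (0 : L2 d) M)] with u hu
  have h3 : ‖u‖ < M := by simpa [mem_ball, dist_zero_right] using hu
  rw [FcB_apply, Fc_eq_GG d hr u (by linarith)]

/-- a.e. membership in the ball. -/
lemma ae_mem_ball {M : ℝ} (ν : Measure (L2 d)) (hb : ν (ball (0 : L2 d) M) = 1)
    [IsProbabilityMeasure ν] : ∀ᵐ u ∂ν, u ∈ ball (0 : L2 d) M := by
  have hcompl : ν (ball (0 : L2 d) M)ᶜ = 0 := by
    rw [measure_compl measurableSet_ball (measure_ne_top _ _), hb, measure_univ, tsub_self]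
  exact mem_ae_iff.2 hcompl


/-- Part (i): the limit `L²` bound. -/
lemma part_one (T M : ℝ) (hM : 0 < M)
    (μn : ℕ → ℝ → Measure (L2 d)) (μ : ℝ → Measure (L2 d))
    (hmeas : WeakStarMeasurable d μ)
    (hprobn : ∀ n, ∀ t ∈ Set.Ico (0 : ℝ) T, IsProbabilityMeasure (μn n t))
    (hprob : ∀ t ∈ Set.Ico (0 : ℝ) T, IsProbabilityMeasure (μ t))
    (hballn : ∀ n, ∀ᵐ t ∂(volume.restrict (Set.Ico (0 : ℝ) T)),
      μn n t (ball (0 : L2 d) M) = 1)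
    (hconv : Tendsto (fun n => dT d T (μn n) μ) atTop (𝓝 0)) :
    ∀ᵐ t ∂(volume.restrict (Set.Ico (0 : ℝ) T)), (∫ u, ‖u‖ ^ 2 ∂(μ t)) ≤ M ^ 2 := by
  set ρ := volume.restrict (Set.Ico (0 : ℝ) T) with hρ
  have hIco : ∀ᵐ t ∂ρ, t ∈ Set.Ico (0 : ℝ) T := ae_restrict_mem measurableSet_Ico
  -- the bad sets are null
  have hnull : ∀ K m : ℕ, ρ {t | t ∈ Set.Ico (0 : ℝ) T
      ∧ M ^ 2 + 1 / (m + 1) ≤ ∫ u, nB d (Nat.cast_nonneg K) u ∂(μ t)} = 0 := by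
    intro K m
    set F := nB d (s := (K : ℝ)) (Nat.cast_nonneg K) with hF
    set δ : ℝ := 1 / (m + 1) with hδdef
    have hδ : 0 < δ := by positivity
    set A := {t | t ∈ Set.Ico (0 : ℝ) T ∧ M ^ 2 + δ ≤ ∫ u, F u ∂(μ t)} with hA
    have hAmeas : MeasurableSet A := by
      have h1 : Measurable fun t => ∫ u, F u ∂(μ t) := hmeas F
      exact measurableSet_Ico.inter (h1 measurableSet_Ici)
    have hsub : A ⊆ Set.Ico (0 : ℝ) T := fun t ht => ht.1
    have hle : volume.restrict A ≤ ρ := Measure.restrict_mono hsub le_rfl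
    set c : ℝ≥0∞ := ((Real.toNNReal (2 * (K : ℝ)) + 1 : ℝ≥0) : ℝ≥0∞) with hc
    have hcne : (Real.toNNReal (2 * (K : ℝ)) + 1 : ℝ≥0) ≠ 0 := by
      simp
    have hζ : ∀ n, ENNReal.ofReal δ * volume A ≤ c * dT d T (μn n) μ := by
      intro n
      have hball := (hballn n).filter_mono (ae_mono hle)
      have hmem : ∀ᵐ t ∂(volume.restrict A), t ∈ A := ae_restrict_mem hAmeas
      have hptw : ∀ᵐ t ∂(volume.restrict A),
          ENNReal.ofReal δ ≤ c * W1 d (μn n t) (μ t) := by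
        filter_upwards [hball, hmem] with t hb ht
        have htI : t ∈ Set.Ico (0 : ℝ) T := ht.1
        haveI h1 := hprobn n t htI
        haveI h2 := hprob t htI
        have hae : ∀ᵐ u ∂(μn n t), u ∈ ball (0 : L2 d) M := ae_mem_ball d _ hb
        have hFn : ∫ u, F u ∂(μn n t) ≤ M ^ 2 := by
          calc ∫ u, F u ∂(μn n t) ≤ ∫ _, M ^ 2 ∂(μn n t) := by
                refine integral_mono_ae (F.integrable _) (integrable_const _) ?_
                filter_upwards [hae] with u hu
                have h3 : ‖u‖ < M := by simpa [mem_ball, dist_zero_right] using hu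
                have h4 : nB d (s := (K : ℝ)) (Nat.cast_nonneg K) u
                    = min ‖u‖ (K : ℝ) ^ 2 := rfl
                rw [hF, h4]
                have h5 := min_le_left ‖u‖ (K : ℝ)
                have h6 : (0:ℝ) ≤ min ‖u‖ (K : ℝ) := le_min (norm_nonneg u) (Nat.cast_nonneg K)
                nlinarith
            _ = M ^ 2 := by simp [measure_univ]
        have htr := transfer d (μn n t) (μ t) F _ hcne (nB_lip d (Nat.cast_nonneg K))
        have hcomb : ENNReal.ofReal (M ^ 2) + ENNReal.ofReal δ
            ≤ ENNReal.ofReal (M ^ 2) + c * W1 d (μn n t) (μ t) := by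
          rw [← ENNReal.ofReal_add (by positivity) hδ.le]
          refine (ENNReal.ofReal_le_ofReal ht.2).trans ?_
          exact htr.trans (add_le_add (ENNReal.ofReal_le_ofReal hFn) le_rfl)
        exact (ENNReal.add_le_add_iff_left ENNReal.ofReal_ne_top).1 hcomb
      calc ENNReal.ofReal δ * volume A = ∫⁻ _ in A, ENNReal.ofReal δ ∂volume := by
            rw [setLIntegral_const]
        _ ≤ ∫⁻ t in A, c * W1 d (μn n t) (μ t) ∂volume := lintegral_mono_ae hptw
        _ = c * ∫⁻ t in A, W1 d (μn n t) (μ t) ∂volume :=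
            lintegral_const_mul' _ _ ENNReal.coe_ne_top
        _ ≤ c * dT d T (μn n) μ := mul_le_mul_right (lintegral_mono' hle le_rfl) _
    have hlim : Tendsto (fun n => c * dT d T (μn n) μ) atTop (𝓝 (c * 0)) :=
      ENNReal.Tendsto.const_mul hconv (Or.inr (hc ▸ ENNReal.coe_ne_top))
    rw [mul_zero] at hlim
    have h0 : ENNReal.ofReal δ * volume A ≤ 0 :=
      ge_of_tendsto hlim (Filter.Eventually.of_forall hζ)
    have hvolA : volume A = 0 := by
      rcases mul_eq_zero.1 (le_antisymm h0 (zero_le)) with h | h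
      · exact absurd h (by simpa using hδ)
      · exact h
    rw [hρ, Measure.restrict_apply hAmeas]
    exact le_antisymm ((measure_mono Set.inter_subset_left).trans hvolA.le) (zero_le)
  have hae_all : ∀ᵐ t ∂ρ, ∀ K m : ℕ, ¬(t ∈ Set.Ico (0 : ℝ) T
      ∧ M ^ 2 + 1 / (m + 1) ≤ ∫ u, nB d (Nat.cast_nonneg K) u ∂(μ t)) := by
    exact ae_all_iff.2 fun K => ae_all_iff.2 fun m =>
      measure_eq_zero_iff_ae_notMem.mp (hnull K m)
  filter_upwards [hae_all, hIco] with t hnot htI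
  haveI := hprob t htI
  have hK : ∀ K : ℕ, ∫ u, nB d (s := (K:ℝ)) (Nat.cast_nonneg K) u ∂(μ t) ≤ M ^ 2 := by
    intro K
    by_contra hgt
    push_neg at hgt
    obtain ⟨m, hm⟩ := exists_nat_one_div_lt (by linarith :
      (0:ℝ) < (∫ u, nB d (s := (K:ℝ)) (Nat.cast_nonneg K) u ∂(μ t)) - M ^ 2)
    exact hnot K m ⟨htI, by linarith⟩
  -- pass to the lintegral
  have hlint : ∫⁻ u, ((‖u‖₊ : ℝ≥0∞)) ^ 2 ∂(μ t) ≤ ENNReal.ofReal (M ^ 2) := by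
    have hsup : ∀ u : L2 d, (⨆ K : ℕ, ENNReal.ofReal (min ‖u‖ (K : ℝ) ^ 2))
        = ((‖u‖₊ : ℝ≥0∞)) ^ 2 := by
      intro u
      have hmono : Monotone fun K : ℕ => ENNReal.ofReal (min ‖u‖ (K : ℝ) ^ 2) := by
        intro i j hij
        refine ENNReal.ofReal_le_ofReal ?_
        have h1 : min ‖u‖ (i : ℝ) ≤ min ‖u‖ (j : ℝ) := min_le_min le_rfl (Nat.cast_le.2 hij)
        have h0 : (0:ℝ) ≤ min ‖u‖ (i : ℝ) := le_min (norm_nonneg u) (Nat.cast_nonneg i)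
        nlinarith
      have htend : Tendsto (fun K : ℕ => ENNReal.ofReal (min ‖u‖ (K : ℝ) ^ 2)) atTop
          (𝓝 (ENNReal.ofReal (‖u‖ ^ 2))) := by
        refine Tendsto.congr' ?_ tendsto_const_nhds
        filter_upwards [eventually_ge_atTop ⌈‖u‖⌉₊] with K hK2
        rw [min_eq_left ((Nat.le_ceil _).trans (Nat.cast_le.2 hK2))]
      have huniq : (⨆ K : ℕ, ENNReal.ofReal (min ‖u‖ (K : ℝ) ^ 2))
          = ENNReal.ofReal (‖u‖ ^ 2) :=
        tendsto_nhds_unique (tendsto_atTop_iSup hmono) htend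
      rw [huniq, ENNReal.ofReal_pow (norm_nonneg u), ofReal_norm_eq_coe_nnnorm]
    calc ∫⁻ u, ((‖u‖₊ : ℝ≥0∞)) ^ 2 ∂(μ t)
        = ∫⁻ u, ⨆ K : ℕ, ENNReal.ofReal (min ‖u‖ (K : ℝ) ^ 2) ∂(μ t) :=
          lintegral_congr fun u => (hsup u).symm
      _ = ⨆ K : ℕ, ∫⁻ u, ENNReal.ofReal (min ‖u‖ (K : ℝ) ^ 2) ∂(μ t) := by
          refine lintegral_iSup' (fun K => Measurable.aemeasurable ?_)
            (Filter.Eventually.of_forall fun u i j hij => ?_)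
          · exact ((nB d (s := (K:ℝ)) (Nat.cast_nonneg K)).continuous.measurable).ennreal_ofReal
          · refine ENNReal.ofReal_le_ofReal ?_
            have h1 : min ‖u‖ (i : ℝ) ≤ min ‖u‖ (j : ℝ) := min_le_min le_rfl (Nat.cast_le.2 hij)
            have h0 : (0:ℝ) ≤ min ‖u‖ (i : ℝ) := le_min (norm_nonneg u) (Nat.cast_nonneg i)
            nlinarith
      _ ≤ ENNReal.ofReal (M ^ 2) := by
          refine iSup_le fun K => ?_
          have hstep : ∫⁻ u, ENNReal.ofReal (min ‖u‖ (K : ℝ) ^ 2) ∂(μ t)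
              = ∫⁻ u, ENNReal.ofReal ((nB d (s := (K:ℝ)) (Nat.cast_nonneg K)) u) ∂(μ t) := rfl
          rw [hstep, ← ofReal_integral_eq_lintegral_ofReal
            ((nB d (s := (K:ℝ)) (Nat.cast_nonneg K)).integrable (μ t))
            (Filter.Eventually.of_forall fun u => sq_nonneg _)]
          exact ENNReal.ofReal_le_ofReal (hK K)
  have hASM : AEStronglyMeasurable (fun u : L2 d => ‖u‖ ^ 2) (μ t) :=
    ((continuous_norm.pow 2).aestronglyMeasurable)
  rw [integral_eq_lintegral_of_nonneg_ae (Filter.Eventually.of_forall fun u => sq_nonneg _) hASM]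
  have hlint2 : ∫⁻ u, ENNReal.ofReal (‖u‖ ^ 2) ∂(μ t) ≤ ENNReal.ofReal (M ^ 2) := by
    refine le_trans (le_of_eq (lintegral_congr fun u => ?_)) hlint
    rw [ENNReal.ofReal_pow (norm_nonneg u), ofReal_norm_eq_coe_nnnorm]
  calc (∫⁻ u, ENNReal.ofReal (‖u‖ ^ 2) ∂(μ t)).toReal
      ≤ (ENNReal.ofReal (M ^ 2)).toReal := ENNReal.toReal_mono ENNReal.ofReal_ne_top hlint2
    _ = M ^ 2 := ENNReal.toReal_ofReal (by positivity)


/-- Part (ii): the limit structure-function bound. -/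
lemma part_two (T M r : ℝ) (hM : 0 < M) (hr : 0 < r) (ω : ℝ → ℝ) (hω_nonneg : ∀ r, 0 ≤ ω r)
    (μn : ℕ → ℝ → Measure (L2 d)) (μ : ℝ → Measure (L2 d))
    (hmeasn : ∀ n, WeakStarMeasurable d (μn n)) (hmeas : WeakStarMeasurable d μ)
    (hprobn : ∀ n, ∀ t ∈ Set.Ico (0 : ℝ) T, IsProbabilityMeasure (μn n t))
    (hprob : ∀ t ∈ Set.Ico (0 : ℝ) T, IsProbabilityMeasure (μ t))
    (hballn : ∀ n, ∀ᵐ t ∂(volume.restrict (Set.Ico (0 : ℝ) T)),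
      μn n t (ball (0 : L2 d) M) = 1)
    (hSn : ∀ n, sqStructFnT d (μn n) T r ≤ ω r)
    (hconv : Tendsto (fun n => dT d T (μn n) μ) atTop (𝓝 0)) :
    sqStructFnT d μ T r ≤ ω r := by
  set ρ := volume.restrict (Set.Ico (0 : ℝ) T) with hρ
  have hIco : ∀ᵐ t ∂ρ, t ∈ Set.Ico (0 : ℝ) T := ae_restrict_mem measurableSet_Ico
  haveI hP := isProbabilityMeasure_P d hr
  have h2M : (0 : ℝ) ≤ 2 * M := by positivity
  set Fk : ℕ → BoundedContinuousFunction (L2 d) ℝ :=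
    fun K => FcB d hr (Nat.cast_nonneg K) with hFk
  -- Step 1: uniform bound along the approximating sequence
  have hcount : ∀ n (K : ℕ), (∫⁻ t in Set.Ico (0 : ℝ) T,
      ENNReal.ofReal (∫ u, Fk K u ∂(μn n t))) ≤ ENNReal.ofReal (ω r) := by
    intro n K
    have haeg : (fun t => sqStructFn d (μn n t) r)
        =ᵐ[ρ] fun t => ∫ u, FcB d hr h2M u ∂(μn n t) := by
      filter_upwards [hballn n, hIco] with t hb htI
      haveI := hprobn n t htI
      exact sqStructFn_eq_trunc d hr h2M (μn n t) hb
    have hbdd : ∀ᵐ t ∂ρ, ‖∫ u, FcB d hr h2M u ∂(μn n t)‖ ≤ ‖FcB d hr h2M‖ := by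
      filter_upwards [hIco] with t htI
      haveI := hprobn n t htI
      exact norm_integral_BCF_le d _
    have hgint : Integrable (fun t => sqStructFn d (μn n t) r) ρ := by
      refine Integrable.congr ?_ haeg.symm
      exact Integrable.mono' (integrable_const ‖FcB d hr h2M‖)
        (hmeasn n (FcB d hr h2M)).aestronglyMeasurable hbdd
    calc ∫⁻ t in Set.Ico (0 : ℝ) T, ENNReal.ofReal (∫ u, Fk K u ∂(μn n t))
        ≤ ∫⁻ t in Set.Ico (0 : ℝ) T, ENNReal.ofReal (sqStructFn d (μn n t) r) := by
          refine lintegral_mono_ae ?_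
          filter_upwards [hIco, hballn n] with t htI hb
          haveI := hprobn n t htI
          refine ENNReal.ofReal_le_ofReal ?_
          rw [sqStructFn_eq d hr]
          have hGGint : Integrable (fun u => GG d r u) (μn n t) := by
            refine Integrable.congr ((FcB d hr h2M).integrable _) ?_
            filter_upwards [ae_mem_ball d (μn n t) hb] with u hu
            have h3 : ‖u‖ < M := by simpa [mem_ball, dist_zero_right] using hu
            exact Fc_eq_GG d hr u (by linarith)
          exact integral_mono ((Fk K).integrable _) hGGint
            (fun u => Fc_le_GG d hr (Nat.cast_nonneg K) u)
      _ = ENNReal.ofReal (∫ t in Set.Ico (0 : ℝ) T, sqStructFn d (μn n t) r) :=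
          (ofReal_integral_eq_lintegral_ofReal hgint
            (Filter.Eventually.of_forall fun t => sqStructFn_nonneg d hr _)).symm
      _ ≤ ENNReal.ofReal (ω r) := ENNReal.ofReal_le_ofReal (hSn n)
  -- Step 2: bound for the limit family, per truncation level
  have hJK : ∀ K : ℕ, (∫⁻ t in Set.Ico (0 : ℝ) T,
      ENNReal.ofReal (∫ u, Fk K u ∂(μ t))) ≤ ENNReal.ofReal (ω r) := by
    intro K
    set cK : ℝ≥0 := Real.toNNReal (4 * (K : ℝ)) + 1 with hcK
    have hcKne : cK ≠ 0 := by simp [hcK]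
    have hn : ∀ n, (∫⁻ t in Set.Ico (0 : ℝ) T, ENNReal.ofReal (∫ u, Fk K u ∂(μ t)))
        ≤ ENNReal.ofReal (ω r) + (cK : ℝ≥0∞) * dT d T (μn n) μ := by
      intro n
      calc ∫⁻ t in Set.Ico (0 : ℝ) T, ENNReal.ofReal (∫ u, Fk K u ∂(μ t))
          ≤ ∫⁻ t in Set.Ico (0 : ℝ) T, (ENNReal.ofReal (∫ u, Fk K u ∂(μn n t))
              + (cK : ℝ≥0∞) * W1 d (μn n t) (μ t)) := by
            refine lintegral_mono_ae ?_
            filter_upwards [hIco] with t htI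
            haveI := hprobn n t htI
            haveI := hprob t htI
            exact transfer d (μn n t) (μ t) (Fk K) cK hcKne
              (by rw [hcK]; exact FcB_lip d hr (Nat.cast_nonneg K))
        _ = (∫⁻ t in Set.Ico (0 : ℝ) T, ENNReal.ofReal (∫ u, Fk K u ∂(μn n t)))
            + ∫⁻ t in Set.Ico (0 : ℝ) T, (cK : ℝ≥0∞) * W1 d (μn n t) (μ t) :=
          lintegral_add_left ((hmeasn n (Fk K)).ennreal_ofReal) _
        _ ≤ ENNReal.ofReal (ω r) + (cK : ℝ≥0∞) * dT d T (μn n) μ := by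
            refine add_le_add (hcount n K) ?_
            rw [lintegral_const_mul' _ _ ENNReal.coe_ne_top]
            exact le_rfl
    have hlim : Tendsto (fun n => ENNReal.ofReal (ω r) + (cK : ℝ≥0∞) * dT d T (μn n) μ)
        atTop (𝓝 (ENNReal.ofReal (ω r) + (cK : ℝ≥0∞) * 0)) :=
      Tendsto.const_add _ (ENNReal.Tendsto.const_mul hconv (Or.inr ENNReal.coe_ne_top))
    rw [mul_zero, add_zero] at hlim
    exact ge_of_tendsto hlim (Filter.Eventually.of_forall hn)
  -- Step 3: monotone convergence
  have hMCT : (∫⁻ t in Set.Ico (0 : ℝ) T, ∫⁻ u, ENNReal.ofReal (GG d r u) ∂(μ t))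
      ≤ ENNReal.ofReal (ω r) := by
    have hcong : ∀ᵐ t ∂ρ, (∫⁻ u, ENNReal.ofReal (GG d r u) ∂(μ t))
        = ⨆ K : ℕ, ENNReal.ofReal (∫ u, Fk K u ∂(μ t)) := by
      filter_upwards [hIco] with t htI
      haveI := hprob t htI
      have hsupu : ∀ u : L2 d, (⨆ K : ℕ, ENNReal.ofReal (Fc d r (K : ℝ) u))
          = ENNReal.ofReal (GG d r u) := by
        intro u
        have hmono : Monotone fun K : ℕ => ENNReal.ofReal (Fc d r (K : ℝ) u) :=
          fun i j hij => ENNReal.ofReal_le_ofReal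
            (Fc_mono d hr (Nat.cast_nonneg i) (Nat.cast_le.2 hij) u)
        have htend : Tendsto (fun K : ℕ => ENNReal.ofReal (Fc d r (K : ℝ) u)) atTop
            (𝓝 (ENNReal.ofReal (GG d r u))) :=
          (ENNReal.continuous_ofReal.tendsto _).comp (Fc_tendsto d hr u)
        exact tendsto_nhds_unique (tendsto_atTop_iSup hmono) htend
      calc ∫⁻ u, ENNReal.ofReal (GG d r u) ∂(μ t)
          = ∫⁻ u, ⨆ K : ℕ, ENNReal.ofReal (Fc d r (K : ℝ) u) ∂(μ t) :=
            lintegral_congr fun u => (hsupu u).symm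
        _ = ⨆ K : ℕ, ∫⁻ u, ENNReal.ofReal (Fc d r (K : ℝ) u) ∂(μ t) :=
            lintegral_iSup'
              (fun K => ((Fk K).continuous.measurable.ennreal_ofReal).aemeasurable)
              (Filter.Eventually.of_forall fun u i j hij => ENNReal.ofReal_le_ofReal
                (Fc_mono d hr (Nat.cast_nonneg i) (Nat.cast_le.2 hij) u))
        _ = ⨆ K : ℕ, ENNReal.ofReal (∫ u, Fk K u ∂(μ t)) := by
            refine iSup_congr fun K => ?_
            have hrfl : ∫⁻ u, ENNReal.ofReal (Fc d r (K : ℝ) u) ∂(μ t)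
                = ∫⁻ u, ENNReal.ofReal (Fk K u) ∂(μ t) := rfl
            rw [hrfl, ← ofReal_integral_eq_lintegral_ofReal ((Fk K).integrable (μ t))
              (Filter.Eventually.of_forall fun u => Fc_nonneg d u)]
    calc ∫⁻ t in Set.Ico (0 : ℝ) T, ∫⁻ u, ENNReal.ofReal (GG d r u) ∂(μ t)
        = ∫⁻ t in Set.Ico (0 : ℝ) T, ⨆ K : ℕ, ENNReal.ofReal (∫ u, Fk K u ∂(μ t)) :=
          lintegral_congr_ae hcong
      _ = ⨆ K : ℕ, ∫⁻ t in Set.Ico (0 : ℝ) T, ENNReal.ofReal (∫ u, Fk K u ∂(μ t)) := by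
          refine lintegral_iSup' (fun K => ((hmeas (Fk K)).ennreal_ofReal).aemeasurable) ?_
          filter_upwards [hIco] with t htI
          intro i j hij
          haveI := hprob t htI
          exact ENNReal.ofReal_le_ofReal (integral_mono ((Fk i).integrable _)
            ((Fk j).integrable _)
            (fun u => Fc_mono d hr (Nat.cast_nonneg i) (Nat.cast_le.2 hij) u))
      _ ≤ ENNReal.ofReal (ω r) := iSup_le hJK
  -- Step 4: conclude
  have hfinal : ENNReal.ofReal (sqStructFnT d μ T r) ≤ ENNReal.ofReal (ω r) := by
    have h1 : ENNReal.ofReal (sqStructFnT d μ T r)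
        ≤ ∫⁻ t in Set.Ico (0 : ℝ) T, ENNReal.ofReal (sqStructFn d (μ t) r) := by
      by_cases hi : Integrable (fun t => sqStructFn d (μ t) r) ρ
      · show ENNReal.ofReal (∫ t in Set.Ico (0 : ℝ) T, sqStructFn d (μ t) r) ≤ _
        rw [ofReal_integral_eq_lintegral_ofReal hi
          (Filter.Eventually.of_forall fun t => sqStructFn_nonneg d hr _)]
      · show ENNReal.ofReal (∫ t in Set.Ico (0 : ℝ) T, sqStructFn d (μ t) r) ≤ _
        rw [integral_undef hi]
        simp
    have h2 : (∫⁻ t in Set.Ico (0 : ℝ) T, ENNReal.ofReal (sqStructFn d (μ t) r))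
        ≤ ∫⁻ t in Set.Ico (0 : ℝ) T, ∫⁻ u, ENNReal.ofReal (GG d r u) ∂(μ t) := by
      refine lintegral_mono fun t => ?_
      rw [sqStructFn_eq d hr]
      by_cases hi : Integrable (fun u => GG d r u) (μ t)
      · rw [ofReal_integral_eq_lintegral_ofReal hi
          (Filter.Eventually.of_forall fun u => GG_nonneg d u)]
      · rw [integral_undef hi]
        simp
    exact (h1.trans h2).trans hMCT
  exact (ENNReal.ofReal_le_ofReal_iff (hω_nonneg r)).1 hfinal

end ThmAux

/-- **Theorem 2.14, properties of the limit.** If `(μⁿ_t)` are weak-* measurable families of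
Borel probability measures on `L²_x`, each concentrated on `B_M(0)` for a.e. `t ∈ [0,T)` and
with the uniform structure-function bound `S²_r(μⁿ_·,T)² ≤ ω(r)`, and if
`∫₀^T W₁(μⁿ_t, μ_t) dt → 0`, then the limit family satisfies the `L²`-bound
`∫ ‖u‖² dμ_t(u) ≤ M²` for a.e. `t ∈ [0,T)` and the same structure-function bound
`S²_r(μ_·,T)² ≤ ω(r)` for every `r > 0`. -/
theorem limit_L2_bound_and_structFn_bound (d : ℕ) (T M : ℝ) (hT : 0 < T) (hM : 0 < M)
    (ω : ℝ → ℝ) (hω_nonneg : ∀ r, 0 ≤ ω r)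
    (hω : Filter.Tendsto ω (nhdsWithin 0 (Set.Ioi 0)) (nhds 0))
    (μn : ℕ → ℝ → Measure (L2 d)) (μ : ℝ → Measure (L2 d))
    (hmeasn : ∀ n, WeakStarMeasurable d (μn n)) (hmeas : WeakStarMeasurable d μ)
    (hprobn : ∀ n, ∀ t ∈ Set.Ico (0 : ℝ) T, IsProbabilityMeasure (μn n t))
    (hprob : ∀ t ∈ Set.Ico (0 : ℝ) T, IsProbabilityMeasure (μ t))
    (hballn : ∀ n, ∀ᵐ t ∂(volume.restrict (Set.Ico (0 : ℝ) T)),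
      μn n t (ball (0 : L2 d) M) = 1)
    (hSn : ∀ n, ∀ r : ℝ, 0 < r → sqStructFnT d (μn n) T r ≤ ω r)
    (hconv : Filter.Tendsto (fun n => dT d T (μn n) μ) Filter.atTop (nhds 0)) :
    (∀ᵐ t ∂(volume.restrict (Set.Ico (0 : ℝ) T)),
        (∫ u, ‖u‖ ^ 2 ∂(μ t)) ≤ M ^ 2) ∧
      ∀ r : ℝ, 0 < r → sqStructFnT d μ T r ≤ ω r := by
  constructor
  · exact ThmAux.part_one d T M hM μn μ hmeas hprobn hprob hballn hconv
  · intro r hrr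
    exact ThmAux.part_two d T M r hM hrr ω hω_nonneg μn μ hmeasn hmeas hprobn hprob hballn
      (fun n => hSn n r hrr) hconv
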